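/- For all u, v ∈ ℤ^n one has h_{u+v} = h_u · h_v and h_u = ∏_{1 ≤ i ≤ n} h_{e_i}^{u_i}. -/

import Mathlib

open scoped BigOperators

noncomputable section

/-- The structure coefficient `q^⟨u|v⟩ = ∏_{i<j} q_{ij}^{u_j v_i}` for `u v : Fin n → ℤ`. -/
def qpowZ {K : Type*} [Field K] {n : ℕ} (q : Fin n → Fin n → K) (u v : Fin n → ℤ) : K :=
  ∏ i : Fin n, ∏ j : Fin n, if i < j then q i j ^ (u j * v i) else 1

/-- The `i`-th standard basis vector of `ℤ^n`. -/
def eZ {n : ℕ} (i : Fin n) : Fin n → ℤ := fun t => if t = i then 1 else 0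

/-- `h_v = q^⟨a-1-v|v⟩ · (q^⟨v|a-1-v⟩)⁻¹`. -/
def hCoef {K : Type*} [Field K] {n : ℕ} (q : Fin n → Fin n → K) (a : Fin n → ℕ)
    (v : Fin n → ℤ) : K :=
  qpowZ q (fun i => (a i : ℤ) - 1 - v i) v *
    (qpowZ q v (fun i => (a i : ℤ) - 1 - v i))⁻¹

lemma aux_zpow_sum {K : Type*} [Field K] {α : Type*} (s : Finset α) (x : K) (hx : x ≠ 0)
    (f : α → ℤ) : ∏ k ∈ s, x ^ f k = x ^ ∑ k ∈ s, f k := by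
  classical
  induction s using Finset.induction with
  | empty => simp
  | insert _ _ h ih => simp [Finset.prod_insert h, Finset.sum_insert h, ih, zpow_add₀ hx]

lemma hCoef_eq {K : Type*} [Field K] {n : ℕ} (q : Fin n → Fin n → K) (a : Fin n → ℕ)
    (hq0 : ∀ i j, q i j ≠ 0) (v : Fin n → ℤ) :
    hCoef q a v = ∏ i : Fin n, ∏ j : Fin n,
      (if i < j then q i j else 1) ^ (((a j : ℤ) - 1) * v i - ((a i : ℤ) - 1) * v j) := by
  unfold hCoef qpowZ
  rw [← Finset.prod_inv_distrib, ← Finset.prod_mul_distrib]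
  refine Finset.prod_congr rfl fun i _ => ?_
  rw [← Finset.prod_inv_distrib, ← Finset.prod_mul_distrib]
  refine Finset.prod_congr rfl fun j _ => ?_
  by_cases h : i < j
  · simp only [h, if_true]
    rw [← zpow_neg, ← zpow_add₀ (hq0 i j)]
    congr 1
    ring
  · simp [h]

theorem stmt4 {K : Type*} [Field K] {n : ℕ} (hn : 1 ≤ n)
    (q : Fin n → Fin n → K) (a : Fin n → ℕ)
    (hq0 : ∀ i j, q i j ≠ 0) (hqii : ∀ i, q i i = 1)
    (hqsym : ∀ i j, q i j * q j i = 1) (ha : ∀ i, 2 ≤ a i)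
    (u v : Fin n → ℤ) :
    hCoef q a (u + v) = hCoef q a u * hCoef q a v ∧
    hCoef q a u = ∏ i : Fin n, (hCoef q a (eZ i)) ^ (u i) := by
  have hbase : ∀ i j : Fin n, (if i < j then q i j else 1) ≠ 0 := by
    intro i j; by_cases h : i < j <;> simp [h, hq0]
  constructor
  · simp only [hCoef_eq q a hq0]
    rw [← Finset.prod_mul_distrib]
    refine Finset.prod_congr rfl fun i _ => ?_
    rw [← Finset.prod_mul_distrib]
    refine Finset.prod_congr rfl fun j _ => ?_
    rw [← zpow_add₀ (hbase i j)]
    congr 1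
    simp [Pi.add_apply]
    ring
  · simp only [hCoef_eq q a hq0]
    conv_rhs =>
      simp only [← Finset.prod_zpow, ← zpow_mul]
    conv_rhs => rw [Finset.prod_comm]
    refine Finset.prod_congr rfl fun i _ => ?_
    conv_rhs => rw [Finset.prod_comm]
    refine Finset.prod_congr rfl fun j _ => ?_
    rw [aux_zpow_sum _ _ (hbase i j)]
    congr 1
    simp [eZ, sub_mul, mul_sub, Finset.sum_sub_distrib, ite_mul, mul_ite, mul_zero, Finset.sum_ite_eq, Finset.sum_ite_eq', mul_comm]
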